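/- Fix an integer n ≥ 2 and w̄ > 0, let g ∈ 𝒢ₙ, and let u be a unit eigenvector of g corresponding to its smallest eigenvalue λ_n(g). Let R = {i : u_i ≥ 0} and define g′ ∈ 𝒢ₙ by: for i ≠ j, g′_{ij} = w̄ if exactly one of i, j lies in R, and g′_{ij} = 0 otherwise (and zero diagonal). Then the smallest eigenvalue of g′ is at most the smallest eigenvalue of g, i.e., λ_n(g′) ≤ λ_n(g). -/

import Mathlib

open Matrix

/-- `μ` is a (real) eigenvalue of the matrix `M`. -/
def hasEigen {n : ℕ} (M : Matrix (Fin n) (Fin n) ℝ) (μ : ℝ) : Prop :=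
  ∃ v : Fin n → ℝ, v ≠ 0 ∧ M.mulVec v = μ • v

/-- The set `𝒢ₙ` of symmetric `n×n` networks with zero diagonal and weights in `[0, w̄]`. -/
def Gset (n : ℕ) (w : ℝ) : Set (Matrix (Fin n) (Fin n) ℝ) :=
  {g | g.IsSymm ∧ (∀ i, g i i = 0) ∧ ∀ i j, 0 ≤ g i j ∧ g i j ≤ w}

/-- Rayleigh bound: a lower bound on all eigenvalues of a Hermitian real matrix bounds the
quadratic form on unit vectors. -/
lemma rayleigh_min {n : ℕ} (M : Matrix (Fin n) (Fin n) ℝ) (hM : M.IsHermitian) (lam' : ℝ)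
    (hle : ∀ i, lam' ≤ hM.eigenvalues i) (u : Fin n → ℝ) (hu1 : ∑ i, u i ^ 2 = 1) :
    lam' ≤ u ⬝ᵥ M *ᵥ u := by
  set U : Matrix (Fin n) (Fin n) ℝ := (hM.eigenvectorUnitary : Matrix (Fin n) (Fin n) ℝ) with hU
  set v : Fin n → ℝ := (star U) *ᵥ u with hv
  have hUU : U * star U = 1 := Matrix.mem_unitaryGroup_iff.mp hM.eigenvectorUnitary.2
  have key : ∀ x : Fin n → ℝ, u ⬝ᵥ (U *ᵥ x) = v ⬝ᵥ x := by
    intro x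
    rw [hv, Matrix.dotProduct_mulVec]
    congr 1
    ext i
    simp [Matrix.vecMul, Matrix.mulVec, dotProduct, Matrix.conjTranspose, mul_comm]
  have hvv : ∑ i, v i ^ 2 = 1 := by
    have : v ⬝ᵥ v = u ⬝ᵥ (U *ᵥ v) := (key v).symm
    rw [hv, Matrix.mulVec_mulVec, hUU, Matrix.one_mulVec] at this
    calc ∑ i, v i ^ 2 = v ⬝ᵥ v := by simp [dotProduct, sq]
    _ = u ⬝ᵥ u := this
    _ = 1 := by simpa [dotProduct, sq] using hu1
  have hMu : u ⬝ᵥ M *ᵥ u = ∑ i, hM.eigenvalues i * v i ^ 2 := by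
    conv_lhs => rw [hM.spectral_theorem, Unitary.conjStarAlgAut_apply, ← hU]
    rw [← Matrix.mulVec_mulVec, ← Matrix.mulVec_mulVec, key]
    simp only [Matrix.mulVec_diagonal, dotProduct]
    exact Finset.sum_congr rfl fun i _ => by simp [Function.comp]; ring
  rw [hMu]
  calc lam' = ∑ i, lam' * v i ^ 2 := by rw [← Finset.mul_sum, hvv, mul_one]
  _ ≤ ∑ i, hM.eigenvalues i * v i ^ 2 :=
    Finset.sum_le_sum fun i _ => mul_le_mul_of_nonneg_right (hle i) (sq_nonneg _)

/-- Rewiring according to the signs of the bottom eigenvector weakly decreases the smallest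
eigenvalue: if `u` is a unit eigenvector of `g` for the smallest eigenvalue `λₙ(g)` and `g′`
has weight `w̄` exactly between `R = {i : uᵢ ≥ 0}` and its complement (and `0` otherwise),
then `λₙ(g′) ≤ λₙ(g)`. -/
theorem stmt13 (n : ℕ) (hn : 2 ≤ n) (w : ℝ) (hw : 0 < w)
    (g : Matrix (Fin n) (Fin n) ℝ) (hg : g ∈ Gset n w)
    (lam : ℝ) (u : Fin n → ℝ) (hu : u ≠ 0) (hu_unit : (∑ i, u i ^ 2) = 1)
    (heig : g.mulVec u = lam • u)
    (hmin : ∀ μ : ℝ, hasEigen g μ → lam ≤ μ) :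
    let g' : Matrix (Fin n) (Fin n) ℝ :=
      Matrix.of fun i j => if i = j then 0 else if (0 ≤ u i ↔ 0 ≤ u j) then 0 else w
    ∀ lam' : ℝ, hasEigen g' lam' → (∀ μ : ℝ, hasEigen g' μ → lam' ≤ μ) →
      lam' ≤ lam := by
  intro g' lam' _ hmin'
  obtain ⟨hsym, hdiag, hbound⟩ := hg
  have hg'sym : ∀ i j : Fin n, g' j i = g' i j := by
    intro i j
    by_cases hij : j = i
    · simp [g', hij]
    · have hji : ¬ i = j := fun h => hij h.symm
      simp only [g', Matrix.of_apply, hij, hji, if_false]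
      exact if_congr iff_comm rfl rfl
  have hg'H : g'.IsHermitian :=
    Matrix.ext fun i j => by rw [Matrix.conjTranspose_apply, star_trivial, hg'sym]
  -- every eigenvalue of g' is ≥ lam'
  have hle : ∀ i, lam' ≤ hg'H.eigenvalues i := by
    intro i
    refine hmin' _ ⟨hg'H.eigenvectorBasis i, ?_, hg'H.mulVec_eigenvectorBasis i⟩
    intro h0
    have hnorm := hg'H.eigenvectorBasis.orthonormal.1 i
    rw [show (hg'H.eigenvectorBasis i) = 0 from ?_] at hnorm
    · simp at hnorm
    · ext j
      exact congrFun h0 j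
  have h1 : lam' ≤ u ⬝ᵥ g' *ᵥ u := rayleigh_min g' hg'H lam' hle u hu_unit
  have h2 : u ⬝ᵥ g' *ᵥ u ≤ u ⬝ᵥ g *ᵥ u := by
    simp only [dotProduct, Matrix.mulVec, Finset.mul_sum]
    refine Finset.sum_le_sum fun i _ => Finset.sum_le_sum fun j _ => ?_
    obtain ⟨hge, hlew⟩ := hbound i j
    by_cases hij : i = j
    · simp [g', hij, hdiag]
    · simp only [g', Matrix.of_apply, hij, if_false]
      by_cases h : 0 ≤ u i ↔ 0 ≤ u j
      · by_cases hi : 0 ≤ u i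
        · have hj := h.mp hi
          simp only [h, if_true]
          nlinarith [mul_nonneg (mul_nonneg hi hge) hj]
        · have hj : ¬ 0 ≤ u j := fun hh => hi (h.mpr hh)
          push_neg at hi hj
          simp only [h, if_true]
          nlinarith [mul_nonneg hge (mul_pos_of_neg_of_neg hi hj).le]
      · simp only [h, if_false]
        by_cases hi : 0 ≤ u i
        · have hj : ¬ 0 ≤ u j := fun hh => h (iff_of_true hi hh)
          push_neg at hj
          nlinarith [mul_nonneg (mul_nonneg (sub_nonneg.mpr hlew) hi) (neg_nonneg.mpr hj.le)]
        · have hj : 0 ≤ u j := by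
            by_contra hj
            exact h (iff_of_false hi hj)
          push_neg at hi
          nlinarith [mul_nonneg (mul_nonneg (sub_nonneg.mpr hlew) hj) (neg_nonneg.mpr hi.le)]
  have h3 : u ⬝ᵥ g *ᵥ u = lam := by
    rw [heig]
    calc u ⬝ᵥ lam • u = lam * (u ⬝ᵥ u) := dotProduct_smul lam u u |>.trans rfl
    _ = lam := by rw [show u ⬝ᵥ u = 1 by simpa [dotProduct, sq] using hu_unit, mul_one]
  linarith
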